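/- Let X be a finite set of at least three candidate architectures and n ≥ 1 stakeholders, and let A be a software architecture selection method defined on profiles of injective reported benefit functions rᵢ : X → ℝ, with A onto X. If A is not a dictatorship (i.e., there is no stakeholder i with rᵢ(A(r)) ≥ rᵢ(x) for every profile r and every x ∈ X), then A is manipulable: there exist a stakeholder i, a profile u of injective benefit functions (interpreted as the true benefits), and an injective function v : X → ℝ such that uᵢ(A(u with i-th component replaced by v)) > uᵢ(A(u)); that is, stakeholder i can strictly increase her true benefit by misreporting. -/

import Mathlib

set_option linter.unusedSectionVars false

namespace GS

open Function

variable {X : Type*} [DecidableEq X]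

noncomputable def rank (base : X → ℝ) : List X → X → ℝ
  | [] => base
  | a :: l => fun x => if x = a then (l.length : ℝ) + 1 else rank base l x

variable {base : X → ℝ}

lemma rank_nil (x : X) : rank base [] x = base x := rfl

lemma rank_cons_self (a : X) (l : List X) : rank base (a :: l) a = (l.length : ℝ) + 1 := by
  simp [rank]

lemma rank_cons_ne {x a : X} (l : List X) (h : x ≠ a) :
    rank base (a :: l) x = rank base l x := by
  simp [rank, h]

lemma rank_not_mem {x : X} {l : List X} (h : x ∉ l) : rank base l x = base x := by
  induction l with
  | nil => rfl
  | cons a l ih =>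
    rw [rank_cons_ne l (List.ne_of_not_mem_cons h)]
    exact ih (List.not_mem_of_not_mem_cons h)

lemma rank_mem_le {x : X} {l : List X} (h : x ∈ l) : rank base l x ≤ (l.length : ℝ) := by
  induction l with
  | nil => simp at h
  | cons a l ih =>
    rcases eq_or_ne x a with rfl | hxa
    · rw [rank_cons_self]; simp
    · rw [rank_cons_ne l hxa]
      have hx : x ∈ l := by
        rcases List.mem_cons.1 h with h' | h'
        · exact absurd h' hxa
        · exact h'
      refine (ih hx).trans ?_
      simp

lemma rank_one_le {x : X} {l : List X} (h : x ∈ l) : 1 ≤ rank base l x := by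
  induction l with
  | nil => simp at h
  | cons a l ih =>
    rcases eq_or_ne x a with rfl | hxa
    · rw [rank_cons_self]
      have : (0:ℝ) ≤ l.length := Nat.cast_nonneg _
      linarith
    · rw [rank_cons_ne l hxa]
      have hx : x ∈ l := by
        rcases List.mem_cons.1 h with h' | h'
        · exact absurd h' hxa
        · exact h'
      exact ih hx

lemma rank_lt_len (hb1 : ∀ x, base x < 1) (x : X) (l : List X) :
    rank base l x < (l.length : ℝ) + 1 := by
  by_cases h : x ∈ l
  · linarith [rank_mem_le (base := base) h]
  · rw [rank_not_mem h]
    have := hb1 x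
    have : (0:ℝ) ≤ l.length := Nat.cast_nonneg _
    linarith [hb1 x]

lemma rank_pos (hb0 : ∀ x, 0 < base x) (x : X) (l : List X) : 0 < rank base l x := by
  by_cases h : x ∈ l
  · linarith [rank_one_le (base := base) h]
  · rw [rank_not_mem h]; exact hb0 x

lemma rank_lt_head (hb1 : ∀ x, base x < 1) {y a : X} (l : List X) (h : y ≠ a) :
    rank base (a :: l) y < rank base (a :: l) a := by
  rw [rank_cons_ne l h, rank_cons_self]
  exact rank_lt_len hb1 y l

lemma rank_head_ge (hb1 : ∀ x, base x < 1) (a : X) (l : List X) (y : X) :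
    rank base (a :: l) y ≤ rank base (a :: l) a := by
  rcases eq_or_ne y a with rfl | h
  · exact le_refl _
  · exact (rank_lt_head hb1 l h).le

lemma rank_second_ge (hb1 : ∀ x, base x < 1) {a x : X} (hxa : x ≠ a) (y : X) (hy : y ≠ a) :
    rank base [a, x] y ≤ rank base [a, x] x := by
  rcases eq_or_ne y x with rfl | h
  · exact le_refl _
  · rw [rank_cons_ne _ hy, rank_cons_ne _ h, rank_nil, rank_cons_ne _ hxa, rank_cons_self]
    have := hb1 y
    simp
    linarith

lemma rank_lt_second (hb1 : ∀ x, base x < 1) {e h x : X} (l : List X)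
    (hxe : x ≠ e) (hhe : h ≠ e) (hxh : x ≠ h) :
    rank base (e :: h :: l) x < rank base (e :: h :: l) h := by
  rw [rank_cons_ne _ hxe, rank_cons_ne _ hhe]
  exact rank_lt_head hb1 l hxh

lemma rank_top_gt (hb1 : ∀ x, base x < 1) {x y : X} {l : List X}
    (hx : x ∈ l) (hy : y ∉ l) : rank base l y < rank base l x := by
  rw [rank_not_mem hy]
  exact lt_of_lt_of_le (hb1 y) (rank_one_le hx)

lemma rank_inj (hb1 : ∀ x, base x < 1) (hbinj : Function.Injective base)
    {l : List X} (hl : l.Nodup) : Function.Injective (rank base l) := by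
  induction l with
  | nil => exact hbinj
  | cons a l ih =>
    have hl' := (List.nodup_cons.1 hl).2
    intro x y hxy
    by_cases hxa : x = a <;> by_cases hya : y = a
    · rw [hxa, hya]
    · exfalso
      rw [hxa, rank_cons_self, rank_cons_ne _ hya] at hxy
      exact absurd hxy.symm (ne_of_lt (rank_lt_len hb1 y l))
    · exfalso
      rw [hya, rank_cons_self, rank_cons_ne _ hxa] at hxy
      exact absurd hxy (ne_of_lt (rank_lt_len hb1 x l))
    · rw [rank_cons_ne _ hxa, rank_cons_ne _ hya] at hxy
      exact ih hl' hxy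

lemma exists_third [Fintype X] (hX : 3 ≤ Fintype.card X) (x y : X) :
    ∃ z : X, z ≠ x ∧ z ≠ y := by
  have h2 : ∃ z : X, z ∉ ({x, y} : Finset X) := by
    by_contra h'
    push_neg at h'
    have hsub : (Finset.univ : Finset X) ⊆ {x, y} := fun z _ => h' z
    have h4 := Finset.card_le_card hsub
    rw [Finset.card_univ] at h4
    have h3 : ({x, y} : Finset X).card ≤ 2 :=
      (Finset.card_insert_le _ _).trans (by simp)
    omega
  obtain ⟨z, hz⟩ := h2
  simp only [Finset.mem_insert, Finset.mem_singleton, not_or] at hz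
  exact ⟨z, hz.1, hz.2⟩

lemma exists_third3 [Fintype X] (hX : 3 ≤ Fintype.card X) :
    ∃ a b c : X, a ≠ b ∧ a ≠ c ∧ b ≠ c := by
  haveI : Nonempty X := Fintype.card_pos_iff.mp (lt_of_lt_of_le (by norm_num) hX)
  obtain ⟨a⟩ := ‹Nonempty X›
  obtain ⟨b, hb⟩ := Fintype.exists_ne_of_one_lt_card (by omega) a
  obtain ⟨c, hc1, hc2⟩ := exists_third hX a b
  exact ⟨a, b, c, hb.symm, hc1.symm, hc2.symm⟩

section Main

variable [Fintype X] {n : ℕ}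

/-- Bundled context: the selection method with all standing hypotheses. -/
structure Env (X : Type*) [Fintype X] [DecidableEq X] (n : ℕ) where
  A : (Fin n → X → ℝ) → X
  base : X → ℝ
  hb0 : ∀ x, 0 < base x
  hb1 : ∀ x, base x < 1
  hbinj : Function.Injective base
  hn : 0 < n
  hX : 3 ≤ Fintype.card X
  honto : ∀ x, ∃ r : Fin n → X → ℝ, (∀ j, Function.Injective (r j)) ∧ A r = x
  hSP : ∀ (i : Fin n) (u : Fin n → X → ℝ) (v : X → ℝ),
      (∀ j, Function.Injective (u j)) → Function.Injective v →
      u i (A (Function.update u i v)) ≤ u i (A u)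

namespace Env

variable (E : Env X n)

def PInj (u : Fin n → X → ℝ) : Prop := ∀ j, Function.Injective (u j)

lemma pinj_update {u : Fin n → X → ℝ} {i : Fin n} {v : X → ℝ}
    (hu : PInj u) (hv : Function.Injective v) : PInj (Function.update u i v) := by
  intro j
  rcases eq_or_ne j i with rfl | h
  · simpa using hv
  · rw [Function.update_of_ne h]; exact hu j

/-- single-voter strong monotonicity -/
lemma mon1 {u : Fin n → X → ℝ} {i : Fin n} {v : X → ℝ}
    (hu : PInj u) (hv : Function.Injective v)
    (hk : ∀ y, u i y ≤ u i (E.A u) → v y ≤ v (E.A u)) :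
    E.A (Function.update u i v) = E.A u := by
  have h1 : u i (E.A (Function.update u i v)) ≤ u i (E.A u) := E.hSP i u v hu hv
  have h2 := E.hSP i (Function.update u i v) (u i) (pinj_update hu hv) (hu i)
  rw [Function.update_idem, Function.update_eq_self] at h2
  simp only [Function.update_self] at h2
  exact hv (le_antisymm (hk _ h1) h2)

/-- strong monotonicity: if the chosen alternative does not fall in anyone's
reported benefits, it remains chosen. -/
lemma mon {u u' : Fin n → X → ℝ} (hu : PInj u) (hu' : PInj u')
    (hk : ∀ i y, u i y ≤ u i (E.A u) → u' i y ≤ u' i (E.A u)) :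
    E.A u' = E.A u := by
  have main : ∀ k : ℕ, E.A (fun i => if (i : ℕ) < k then u' i else u i) = E.A u := by
    intro k
    induction k with
    | zero =>
      have : (fun i : Fin n => if (i : ℕ) < 0 then u' i else u i) = u := by
        funext i; simp
      rw [this]
    | succ k ih =>
      by_cases hkn : k < n
      · set K : Fin n := ⟨k, hkn⟩ with hK
        set w : Fin n → X → ℝ := fun i => if (i : ℕ) < k then u' i else u i with hw
        have hwinj : PInj w := by
          intro j
          by_cases h : (j : ℕ) < k
          · simpa [hw, h] using hu' j
          · simpa [hw, h] using hu j
        have hstep : (fun i : Fin n => if (i : ℕ) < k + 1 then u' i else u i)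
            = Function.update w K (u' K) := by
          funext i
          rcases eq_or_ne i K with rfl | hi
          · simp [hw, hK]
          · rw [Function.update_of_ne hi]
            have hik : (i : ℕ) ≠ k := fun h => hi (Fin.ext h)
            by_cases h2 : (i : ℕ) < k
            · simp [hw, h2, Nat.lt_succ_of_lt h2]
            · have h3 : ¬ (i : ℕ) < k + 1 := by omega
              simp [hw, h2, h3]
        rw [hstep]
        rw [mon1 E hwinj (hu' K) ?_]
        · exact ih
        · intro y hy
          rw [ih] at hy ⊢
          have hwK : w K = u K := by simp [hw, hK]
          rw [hwK] at hy
          exact hk K y hy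
      · have : (fun i : Fin n => if (i : ℕ) < k + 1 then u' i else u i)
            = (fun i : Fin n => if (i : ℕ) < k then u' i else u i) := by
          funext i
          have h1 : (i : ℕ) < k := lt_of_lt_of_le i.isLt (not_lt.1 hkn)
          simp [h1, Nat.lt_succ_of_lt h1]
        rw [this]; exact ih
  have := main n
  have heq : (fun i : Fin n => if (i : ℕ) < n then u' i else u i) = u' := by
    funext i; simp [i.isLt]
  rwa [heq] at this

/-- Pareto: a unanimous strict top is selected. -/
lemma pareto {u : Fin n → X → ℝ} (hu : PInj u) {x : X}
    (hx : ∀ i y, y ≠ x → u i y < u i x) : E.A u = x := by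
  obtain ⟨r, hr, hrx⟩ := E.honto x
  have := E.mon hr hu (fun i y hy => by
    rw [hrx]
    rcases eq_or_ne y x with rfl | h
    · exact le_refl _
    · exact (hx i y h).le)
  rw [this, hrx]

/-- no Pareto-dominated alternative is ever selected. -/
lemma nodom {u : Fin n → X → ℝ} (hu : PInj u) {b c : X}
    (hbc : ∀ i, u i c < u i b) : E.A u ≠ c := by
  intro h
  have hne : Nonempty (Fin n) := ⟨⟨0, E.hn⟩⟩
  have hXne : (Finset.univ : Finset X).Nonempty := ⟨c, Finset.mem_univ c⟩
  set M : Fin n → ℝ := fun i => 1 + Finset.univ.sup' hXne (u i) with hM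
  have hMi : ∀ i z, u i z < M i := by
    intro i z
    have : u i z ≤ Finset.univ.sup' hXne (u i) := Finset.le_sup' (u i) (Finset.mem_univ z)
    simp only [hM]; linarith
  set v : Fin n → X → ℝ := fun i => Function.update (u i) b (M i) with hv
  have hcb : c ≠ b := by
    have := hbc ⟨0, E.hn⟩
    intro h'; rw [h'] at this; exact lt_irrefl _ this
  have hvinj : PInj v := by
    intro i z w hzw
    simp only [hv] at hzw
    by_cases hz : z = b <;> by_cases hw : w = b
    · rw [hz, hw]
    · exfalso
      rw [hz, Function.update_self, Function.update_of_ne hw] at hzw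
      exact absurd hzw.symm (ne_of_lt (hMi i w))
    · exfalso
      rw [hw, Function.update_self, Function.update_of_ne hz] at hzw
      exact absurd hzw (ne_of_lt (hMi i z))
    · rw [Function.update_of_ne hz, Function.update_of_ne hw] at hzw
      exact hu i hzw
  have hAv : E.A v = E.A u := E.mon hu hvinj (by
    intro i y hy
    rw [h] at hy ⊢
    rcases eq_or_ne y b with rfl | hyb
    · exact absurd hy (not_le.2 (hbc i))
    · simp only [hv]
      rw [Function.update_of_ne hyb, Function.update_of_ne hcb]
      exact hy)
  have hAvb : E.A v = b := E.pareto hvinj (by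
    intro i y hyb
    simp only [hv]
    rw [Function.update_of_ne hyb, Function.update_self]
    exact hMi i y)
  rw [h] at hAv
  rw [hAvb] at hAv
  exact hcb hAv.symm

/-- canonical two-top profile: coalition `S` reports `a` above `b`, others `b` above `a`. -/
noncomputable def Pab (S : Finset (Fin n)) (a b : X) : Fin n → X → ℝ :=
  fun i => rank E.base (if i ∈ S then [a, b] else [b, a])

lemma pinj_Pab {S : Finset (Fin n)} {a b : X} (hab : a ≠ b) : PInj (E.Pab S a b) := by
  intro i
  by_cases hi : i ∈ S
  · simp only [Pab, if_pos hi]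
    exact rank_inj E.hb1 E.hbinj (by simp [hab])
  · simp only [Pab, if_neg hi]
    exact rank_inj E.hb1 E.hbinj (by simp [hab.symm])

/-- coalition `S` wins `a` against `b`. -/
def Win (S : Finset (Fin n)) (a b : X) : Prop := E.A (E.Pab S a b) = a

lemma win_univ {a b : X} (hab : a ≠ b) : E.Win Finset.univ a b := by
  show E.A (E.Pab Finset.univ a b) = a
  apply E.pareto (E.pinj_Pab hab)
  intro i y hy
  simp only [Pab, if_pos (Finset.mem_univ i)]
  exact rank_lt_head E.hb1 _ hy

lemma win_empty {a b : X} (hab : a ≠ b) : ¬ E.Win ∅ a b := by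
  intro hW
  have : E.A (E.Pab ∅ a b) = b := by
    apply E.pareto (E.pinj_Pab hab)
    intro i y hy
    simp only [Pab, Finset.notMem_empty, if_false]
    exact rank_lt_head E.hb1 _ hy
  exact hab ((hW.symm.trans this))

lemma win_mono {S T : Finset (Fin n)} {a b : X} (hab : a ≠ b) (hST : S ⊆ T)
    (hW : E.Win S a b) : E.Win T a b := by
  show E.A (E.Pab T a b) = a
  have key := E.mon (E.pinj_Pab hab (S := S)) (E.pinj_Pab hab (S := T)) ?_
  · rw [key]; exact hW
  · intro i y hy
    rw [show E.A (E.Pab S a b) = a from hW] at hy ⊢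
    by_cases hiS : i ∈ S
    · have hiT : i ∈ T := hST hiS
      simp only [Pab, if_pos hiS] at hy
      simp only [Pab, if_pos hiT]
      exact hy
    · by_cases hiT : i ∈ T
      · simp only [Pab, if_pos hiT]
        exact rank_head_ge E.hb1 a [b] y
      · simp only [Pab, if_neg hiS] at hy
        simp only [Pab, if_neg hiT]
        exact hy

lemma exp_a {S : Finset (Fin n)} {a b c : X} (hab : a ≠ b) (hac : a ≠ c) (hbc : b ≠ c)
    (hW : E.Win S a b) : E.Win S a c := by
  set T3 : Fin n → X → ℝ :=
    fun i => rank E.base (if i ∈ S then [a, b, c] else [b, c, a]) with hT3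
  have hT3inj : PInj T3 := by
    intro i
    by_cases hi : i ∈ S
    · simp only [hT3, if_pos hi]
      exact rank_inj E.hb1 E.hbinj (by simp [hab, hac, hbc])
    · simp only [hT3, if_neg hi]
      exact rank_inj E.hb1 E.hbinj (by simp [hab.symm, hac.symm, hbc])
  have hmem : E.A T3 = a ∨ E.A T3 = b ∨ E.A T3 = c := by
    by_contra hcon
    push_neg at hcon
    refine E.nodom hT3inj (b := a) ?_ rfl
    intro i
    by_cases hi : i ∈ S
    · simp only [hT3, if_pos hi]
      exact rank_top_gt E.hb1 (by simp) (by simp only [hT3] at hcon; simp [hcon.1, hcon.2.1, hcon.2.2])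
    · simp only [hT3, if_neg hi]
      exact rank_top_gt E.hb1 (by simp) (by simp only [hT3] at hcon; simp [hcon.1, hcon.2.1, hcon.2.2])
  have hzc : E.A T3 ≠ c := by
    refine E.nodom hT3inj (b := b) ?_
    intro i
    by_cases hi : i ∈ S
    · simp only [hT3, if_pos hi]
      exact rank_lt_second E.hb1 [c] hac.symm hab.symm hbc.symm
    · simp only [hT3, if_neg hi]
      exact rank_lt_head E.hb1 _ hbc.symm
  have hzb : E.A T3 ≠ b := by
    intro hz
    have key := E.mon hT3inj (E.pinj_Pab hab (S := S)) ?_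
    · rw [hz] at key
      rw [show E.A (E.Pab S a b) = a from hW] at key
      exact hab key
    · intro i y hy
      rw [hz] at hy ⊢
      by_cases hi : i ∈ S
      · simp only [hT3, if_pos hi] at hy
        simp only [Pab, if_pos hi]
        refine rank_second_ge E.hb1 hab.symm y ?_
        rintro rfl
        exact absurd hy (not_le.2 (rank_lt_head E.hb1 _ hab.symm))
      · simp only [Pab, if_neg hi]
        exact rank_head_ge E.hb1 b [a] y
  have hza : E.A T3 = a := by tauto
  show E.A (E.Pab S a c) = a
  have key := E.mon hT3inj (E.pinj_Pab hac (S := S)) ?_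
  · rw [key]; exact hza
  · intro i y hy
    rw [hza] at hy ⊢
    by_cases hi : i ∈ S
    · simp only [Pab, if_pos hi]
      exact rank_head_ge E.hb1 a [c] y
    · simp only [hT3, if_neg hi] at hy
      simp only [Pab, if_neg hi]
      refine rank_second_ge E.hb1 hac y ?_
      rintro rfl
      exact absurd hy (not_le.2 (rank_lt_second E.hb1 [a] hab hbc.symm hac))

lemma exp_b {S : Finset (Fin n)} {a b c : X} (hab : a ≠ b) (hac : a ≠ c) (hbc : b ≠ c)
    (hW : E.Win S a b) : E.Win S c b := by
  set T3 : Fin n → X → ℝ :=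
    fun i => rank E.base (if i ∈ S then [c, a, b] else [b, c, a]) with hT3
  have hT3inj : PInj T3 := by
    intro i
    by_cases hi : i ∈ S
    · simp only [hT3, if_pos hi]
      exact rank_inj E.hb1 E.hbinj (by simp [hac.symm, hbc.symm, hab])
    · simp only [hT3, if_neg hi]
      exact rank_inj E.hb1 E.hbinj (by simp [hab.symm, hac.symm, hbc])
  have hmem : E.A T3 = a ∨ E.A T3 = b ∨ E.A T3 = c := by
    by_contra hcon
    push_neg at hcon
    refine E.nodom hT3inj (b := c) ?_ rfl
    intro i
    by_cases hi : i ∈ S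
    · simp only [hT3, if_pos hi]
      exact rank_top_gt E.hb1 (by simp) (by simp only [hT3] at hcon; simp [hcon.1, hcon.2.1, hcon.2.2])
    · simp only [hT3, if_neg hi]
      exact rank_top_gt E.hb1 (by simp) (by simp only [hT3] at hcon; simp [hcon.1, hcon.2.1, hcon.2.2])
  have hza : E.A T3 ≠ a := by
    refine E.nodom hT3inj (b := c) ?_
    intro i
    by_cases hi : i ∈ S
    · simp only [hT3, if_pos hi]
      exact rank_lt_head E.hb1 _ hac
    · simp only [hT3, if_neg hi]
      exact rank_lt_second E.hb1 [a] hab hbc.symm hac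
  have hzb : E.A T3 ≠ b := by
    intro hz
    have key := E.mon hT3inj (E.pinj_Pab hab (S := S)) ?_
    · rw [hz] at key
      rw [show E.A (E.Pab S a b) = a from hW] at key
      exact hab key
    · intro i y hy
      rw [hz] at hy ⊢
      by_cases hi : i ∈ S
      · simp only [hT3, if_pos hi] at hy
        simp only [Pab, if_pos hi]
        refine rank_second_ge E.hb1 hab.symm y ?_
        rintro rfl
        exact absurd hy (not_le.2 (rank_lt_second E.hb1 [b] hbc hac hab.symm))
      · simp only [Pab, if_neg hi]
        exact rank_head_ge E.hb1 b [a] y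
  have hzc : E.A T3 = c := by tauto
  show E.A (E.Pab S c b) = c
  have key := E.mon hT3inj (E.pinj_Pab (Ne.symm hbc) (S := S)) ?_
  · rw [key]; exact hzc
  · intro i y hy
    rw [hzc] at hy ⊢
    by_cases hi : i ∈ S
    · simp only [Pab, if_pos hi]
      exact rank_head_ge E.hb1 c [b] y
    · simp only [hT3, if_neg hi] at hy
      simp only [Pab, if_neg hi]
      refine rank_second_ge E.hb1 hbc.symm y ?_
      rintro rfl
      exact absurd hy (not_le.2 (rank_lt_head E.hb1 _ hbc.symm))

lemma win_all {S : Finset (Fin n)} {a b : X} (hab : a ≠ b) (hW : E.Win S a b) :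
    ∀ x y : X, x ≠ y → E.Win S x y := by
  have W1 : ∀ y', y' ≠ a → E.Win S a y' := by
    intro y' h
    rcases eq_or_ne y' b with rfl | h2
    · exact hW
    · exact E.exp_a hab h.symm h2.symm hW
  have W2 : ∀ x' y', y' ≠ a → x' ≠ y' → E.Win S x' y' := by
    intro x' y' hy hxy
    rcases eq_or_ne x' a with rfl | h3
    · exact W1 y' hy
    · exact E.exp_b hy.symm h3.symm hxy.symm (W1 y' hy)
  intro x y hxy
  rcases eq_or_ne y a with heq | hy
  · subst heq
    obtain ⟨z, hz1, hz2⟩ := exists_third E.hX y x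
    have h1 : E.Win S x z := W2 x z hz1 (fun h => hz2 h.symm)
    exact E.exp_a (fun h => hz2 h.symm) hxy hz1 h1
  · exact W2 x y hy hxy

lemma contract {S1 S2 : Finset (Fin n)} {a b c : X} (hab : a ≠ b) (hac : a ≠ c) (hbc : b ≠ c)
    (hS : ∀ x y, x ≠ y → E.Win (S1 ∪ S2) x y) :
    (∀ x y, x ≠ y → E.Win S1 x y) ∨ (∀ x y, x ≠ y → E.Win S2 x y) := by
  set U : Fin n → X → ℝ := fun i => rank E.base
    (if i ∈ S1 then [a, b, c] else if i ∈ S2 then [c, a, b] else [b, c, a]) with hU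
  have hUinj : PInj U := by
    intro i
    simp only [hU]
    split_ifs with h1 h2
    · exact rank_inj E.hb1 E.hbinj (by simp [hab, hac, hbc])
    · exact rank_inj E.hb1 E.hbinj (by simp [hac.symm, hbc.symm, hab])
    · exact rank_inj E.hb1 E.hbinj (by simp [hab.symm, hac.symm, hbc])
  have hmem : E.A U = a ∨ E.A U = b ∨ E.A U = c := by
    by_contra hcon
    push_neg at hcon
    refine E.nodom hUinj (b := a) ?_ rfl
    intro i
    simp only [hU]
    split_ifs with h1 h2
    · exact rank_top_gt E.hb1 (by simp) (by simp only [hU] at hcon; simp [hcon.1, hcon.2.1, hcon.2.2])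
    · exact rank_top_gt E.hb1 (by simp) (by simp only [hU] at hcon; simp [hcon.1, hcon.2.1, hcon.2.2])
    · exact rank_top_gt E.hb1 (by simp) (by simp only [hU] at hcon; simp [hcon.1, hcon.2.1, hcon.2.2])
  have hzb : E.A U ≠ b := by
    intro hz
    have key := E.mon hUinj (E.pinj_Pab hab (S := S1 ∪ S2)) ?_
    · rw [hz] at key
      rw [show E.A (E.Pab (S1 ∪ S2) a b) = a from hS a b hab] at key
      exact hab key
    · intro i y hy
      rw [hz] at hy ⊢
      by_cases h1 : i ∈ S1
      · have hu : i ∈ S1 ∪ S2 := Finset.mem_union_left _ h1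
        simp only [hU, if_pos h1] at hy
        simp only [Pab, if_pos hu]
        refine rank_second_ge E.hb1 hab.symm y ?_
        rintro rfl
        exact absurd hy (not_le.2 (rank_lt_head E.hb1 _ hab.symm))
      · by_cases h2 : i ∈ S2
        · have hu : i ∈ S1 ∪ S2 := Finset.mem_union_right _ h2
          simp only [hU, if_neg h1, if_pos h2] at hy
          simp only [Pab, if_pos hu]
          refine rank_second_ge E.hb1 hab.symm y ?_
          rintro rfl
          exact absurd hy (not_le.2 (rank_lt_second E.hb1 [b] hbc hac hab.symm))
        · have hu : i ∉ S1 ∪ S2 := by simp [h1, h2]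
          simp only [Pab, if_neg hu]
          exact rank_head_ge E.hb1 b [a] y
  rcases hmem with hza | hzb' | hzc
  · left
    refine E.win_all hac ?_
    show E.A (E.Pab S1 a c) = a
    have key := E.mon hUinj (E.pinj_Pab hac (S := S1)) ?_
    · rw [key]; exact hza
    · intro i y hy
      rw [hza] at hy ⊢
      by_cases h1 : i ∈ S1
      · simp only [Pab, if_pos h1]
        exact rank_head_ge E.hb1 a [c] y
      · by_cases h2 : i ∈ S2
        · simp only [hU, if_neg h1, if_pos h2] at hy
          simp only [Pab, if_neg h1]
          refine rank_second_ge E.hb1 hac y ?_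
          rintro rfl
          exact absurd hy (not_le.2 (rank_lt_head E.hb1 _ hac))
        · simp only [hU, if_neg h1, if_neg h2] at hy
          simp only [Pab, if_neg h1]
          refine rank_second_ge E.hb1 hac y ?_
          rintro rfl
          exact absurd hy (not_le.2 (rank_lt_second E.hb1 [a] hab hbc.symm hac))
  · exact absurd hzb' hzb
  · right
    refine E.win_all hbc.symm ?_
    show E.A (E.Pab S2 c b) = c
    have key := E.mon hUinj (E.pinj_Pab hbc.symm (S := S2)) ?_
    · rw [key]; exact hzc
    · intro i y hy
      rw [hzc] at hy ⊢
      by_cases h2 : i ∈ S2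
      · simp only [Pab, if_pos h2]
        exact rank_head_ge E.hb1 c [b] y
      · by_cases h1 : i ∈ S1
        · simp only [hU, if_pos h1] at hy
          simp only [Pab, if_neg h2]
          refine rank_second_ge E.hb1 hbc.symm y ?_
          rintro rfl
          exact absurd hy (not_le.2 (rank_lt_second E.hb1 [c] hac.symm hab.symm hbc.symm))
        · simp only [hU, if_neg h1, if_neg h2] at hy
          simp only [Pab, if_neg h2]
          refine rank_second_ge E.hb1 hbc.symm y ?_
          rintro rfl
          exact absurd hy (not_le.2 (rank_lt_head E.hb1 _ hbc.symm))

lemma exists_sing : ∃ d : Fin n, ∀ x y : X, x ≠ y → E.Win {d} x y := by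
  obtain ⟨a, b, c, hab, hac, hbc⟩ := exists_third3 E.hX
  have key : ∀ m (S : Finset (Fin n)), S.card ≤ m → (∀ x y, x ≠ y → E.Win S x y) →
      ∃ d : Fin n, ∀ x y, x ≠ y → E.Win {d} x y := by
    intro m
    induction m with
    | zero =>
      intro S hc hS
      rw [Nat.le_zero, Finset.card_eq_zero] at hc
      subst hc
      exact absurd (hS a b hab) (E.win_empty hab)
    | succ m ih =>
      intro S hc hS
      rcases S.eq_empty_or_nonempty with rfl | ⟨d, hd⟩
      · exact absurd (hS a b hab) (E.win_empty hab)
      · have hsplit : {d} ∪ S.erase d = S := by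
          rw [← Finset.insert_eq, Finset.insert_erase hd]
        have hS' : ∀ x y, x ≠ y → E.Win ({d} ∪ S.erase d) x y := by
          rw [hsplit]; exact hS
        rcases E.contract hab hac hbc hS' with h | h
        · exact ⟨d, h⟩
        · refine ih (S.erase d) ?_ h
          have := Finset.card_erase_of_mem hd
          omega
  exact key Finset.univ.card Finset.univ le_rfl (fun x y hxy => E.win_univ hxy)

lemma dict : ∃ d : Fin n, ∀ r : Fin n → X → ℝ,
    (∀ j, Function.Injective (r j)) → ∀ x, r d (E.A r) ≥ r d x := by
  obtain ⟨d, hd⟩ := E.exists_sing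
  refine ⟨d, fun r hr => ?_⟩
  haveI hXne' : Nonempty X := Fintype.card_pos_iff.mp (lt_of_lt_of_le (by norm_num) E.hX)
  obtain ⟨x, -, hx⟩ := Finset.exists_max_image Finset.univ (r d) Finset.univ_nonempty
  suffices h : E.A r = x by
    intro y; rw [h]; exact hx y (Finset.mem_univ y)
  by_contra hne
  have hxy : x ≠ E.A r := fun h => hne h.symm
  have key := E.mon (u := r) (u' := E.Pab {d} x (E.A r)) hr (E.pinj_Pab hxy) ?_
  · have hwin : E.A (E.Pab {d} x (E.A r)) = x := hd x (E.A r) hxy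
    rw [hwin] at key
    exact hne key.symm
  · intro i z hz
    by_cases hi : i ∈ ({d} : Finset (Fin n))
    · have hid : i = d := Finset.mem_singleton.1 hi
      subst hid
      simp only [Pab, if_pos hi]
      refine rank_second_ge E.hb1 (fun h => hne h) z ?_
      rintro rfl
      have heq := le_antisymm hz (hx (E.A r) (Finset.mem_univ _))
      exact hxy (hr i heq)
    · simp only [Pab, if_neg hi]
      exact rank_head_ge E.hb1 (E.A r) [x] z

end Env

end Main

end GS


/-- Contrapositive Gibbard–Satterthwaite in the cardinal-benefit setting: every onto,
non-dictatorial software architecture selection method on at least three candidate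
architectures is manipulable — some stakeholder `i` with true (injective) benefits `u i`
can strictly increase her true benefit by misreporting some injective `v`. -/
theorem nondictatorial_selection_is_manipulable
    {X : Type*} [Fintype X] {n : ℕ} (hn : 1 ≤ n) (hX : 3 ≤ Fintype.card X)
    (A : (Fin n → X → ℝ) → X)
    (honto : ∀ x : X, ∃ r : Fin n → X → ℝ,
      (∀ j : Fin n, Function.Injective (r j)) ∧ A r = x)
    (hnd : ¬ ∃ i : Fin n, ∀ r : Fin n → X → ℝ,
      (∀ j : Fin n, Function.Injective (r j)) →
      ∀ x : X, r i (A r) ≥ r i x) :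
    ∃ (i : Fin n) (u : Fin n → X → ℝ) (v : X → ℝ),
      (∀ j : Fin n, Function.Injective (u j)) ∧ Function.Injective v ∧
      u i (A (Function.update u i v)) > u i (A u) := by
  by_contra hman
  push_neg at hman
  apply hnd
  letI : DecidableEq X := Classical.decEq X
  set e := Fintype.equivFin X with he
  set base : X → ℝ := fun x => (((e x : ℕ) : ℝ) + 1) / ((Fintype.card X : ℝ) + 1) with hbase
  have hden : (0:ℝ) < (Fintype.card X : ℝ) + 1 := by positivity
  have hb0 : ∀ x, 0 < base x := fun x => div_pos (by positivity) hden
  have hb1 : ∀ x, base x < 1 := by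
    intro x
    rw [hbase, div_lt_one hden]
    have h1 : (e x : ℕ) < Fintype.card X := (e x).isLt
    have h2 : ((e x : ℕ) : ℝ) < (Fintype.card X : ℝ) := by exact_mod_cast h1
    linarith
  have hbinj : Function.Injective base := by
    intro x y h
    simp only [hbase] at h
    have h2 := congrArg (fun t => t * ((Fintype.card X : ℝ) + 1)) h
    simp only [div_mul_cancel₀ _ (ne_of_gt hden)] at h2
    have h3 : ((e x : ℕ) : ℝ) = ((e y : ℕ) : ℝ) := by linarith
    have h4 : (e x : ℕ) = (e y : ℕ) := by exact_mod_cast h3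
    exact e.injective (Fin.ext h4)
  have hman' : ∀ (i : Fin n) (u : Fin n → X → ℝ) (v : X → ℝ),
      (∀ j, Function.Injective (u j)) → Function.Injective v →
      u i (A (Function.update u i v)) ≤ u i (A u) := by
    intro i u v hu hv
    exact hman i u v hu hv
  exact GS.Env.dict ⟨A, base, hb0, hb1, hbinj, hn, hX, honto, hman'⟩
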